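/- Let a, b ∈ (0,1/2), q = (1−2b)/(1−a−b), and l(x,y;a,b) = q·max{ax,(1−a)y} + (2−q)·max{(1−b)x, by}. Let Δ = {(x,y) ∈ [0,1]² : x + y ≤ 1}. Then ∬_Δ x·l(x,y;a,b) dx dy = J(a,b) and ∬_Δ y·l(x,y;a,b) dx dy = J(b,a), where J(a,b) = (1/24){(2ab − a − b)(b − a + 1) + a(b − 1) + 3}. -/

import Mathlib

open MeasureTheory Set

private def Tset : Set (ℝ × ℝ) :=
  {p : ℝ × ℝ | p.1 ∈ Set.Icc (0:ℝ) 1 ∧ p.2 ∈ Set.Icc (0:ℝ) 1 ∧ p.1 + p.2 ≤ 1}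

private lemma Tset_compact : IsCompact Tset := by
  have h : Tset = (Set.Icc (0:ℝ) 1 ×ˢ Set.Icc (0:ℝ) 1) ∩ {p : ℝ × ℝ | p.1 + p.2 ≤ 1} := by
    ext p; simp [Tset, Set.mem_prod, Set.mem_Icc, Prod.le_def, and_assoc]; tauto
  rw [h]
  exact (isCompact_Icc.prod isCompact_Icc).inter_right
    (isClosed_le (continuous_fst.add continuous_snd) continuous_const)

private lemma Tset_meas : MeasurableSet Tset := Tset_compact.isClosed.measurableSet

private lemma integ_poly (A B C D a b : ℝ) :
    ∫ x in a..b, (A*x^3 + B*x^2 + C*x + D) =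
      (A*b^4/4 + B*b^3/3 + C*b^2/2 + D*b) - (A*a^4/4 + B*a^3/3 + C*a^2/2 + D*a) := by
  have h : ∀ x ∈ Set.uIcc a b, HasDerivAt (fun x : ℝ => A/4*x^4 + B/3*x^3 + C/2*x^2 + D*x)
      (A*x^3 + B*x^2 + C*x + D) x := by
    intro x _
    have h4 : HasDerivAt (fun x : ℝ => x^4) (4*x^3) x := by simpa using hasDerivAt_pow 4 x
    have h3 : HasDerivAt (fun x : ℝ => x^3) (3*x^2) x := by simpa using hasDerivAt_pow 3 x
    have h2 : HasDerivAt (fun x : ℝ => x^2) (2*x) x := by simpa using hasDerivAt_pow 2 x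
    have h1 : HasDerivAt (fun x : ℝ => x) 1 x := hasDerivAt_id x
    have := (((h4.const_mul (A/4)).add (h3.const_mul (B/3))).add (h2.const_mul (C/2))).add
      (h1.const_mul D)
    exact this.congr_deriv (by ring)
  rw [intervalIntegral.integral_eq_sub_of_hasDerivAt h
    ((by fun_prop : Continuous fun x : ℝ => A*x^3 + B*x^2 + C*x + D).intervalIntegrable _ _)]
  ring

private lemma momA (c : ℝ) (hc0 : 0 < c) (hc1 : c < 1) :
    (∫ p in Tset, p.1 * max (c * p.1) ((1 - c) * p.2)) = (1 - c + 3*c^2 - c^3)/24 := by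
  set f : ℝ × ℝ → ℝ := fun p => p.1 * max (c * p.1) ((1 - c) * p.2) with hf
  have hfc : Continuous f := by
    apply continuous_fst.mul
    exact (continuous_const.mul continuous_fst).max (continuous_const.mul continuous_snd)
  have hInt : IntegrableOn f Tset := hfc.continuousOn.integrableOn_compact Tset_compact
  have hind : Integrable (Tset.indicator f) (volume.prod volume) := by
    rw [← Measure.volume_eq_prod]
    rwa [integrable_indicator_iff Tset_meas]
  have h1c : (0:ℝ) < 1 - c := by linarith
  rw [← integral_indicator Tset_meas, Measure.volume_eq_prod, integral_prod _ hind]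
  have key : (fun x => ∫ y, Tset.indicator f (x, y)) =
      (Icc (0:ℝ) 1).indicator (fun x => ∫ y in Icc (0:ℝ) (1-x), f (x, y)) := by
    funext x
    by_cases hx : x ∈ Icc (0:ℝ) 1
    · obtain ⟨hx0, hx1⟩ := hx
      have hy : ∀ y, Tset.indicator f (x, y) = (Icc (0:ℝ) (1-x)).indicator (fun y => f (x, y)) y := by
        intro y
        simp only [Set.indicator_apply, Tset, Set.mem_setOf_eq, Set.mem_Icc]
        by_cases h : 0 ≤ y ∧ y ≤ 1 - x
        · rw [if_pos h, if_pos ⟨⟨hx0, hx1⟩, ⟨h.1, by linarith [h.2]⟩, by linarith [h.2]⟩]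
        · rw [if_neg h, if_neg]
          rintro ⟨_, ⟨hy0, hy1⟩, hxy⟩
          exact h ⟨hy0, by linarith⟩
      simp_rw [hy]
      rw [integral_indicator measurableSet_Icc, Set.indicator_of_mem (Set.mem_Icc.2 ⟨hx0, hx1⟩)]
    · have hy : ∀ y, Tset.indicator f (x, y) = 0 := fun y =>
        Set.indicator_of_notMem (fun hmem => hx hmem.1) f
      simp_rw [hy]
      rw [Set.indicator_of_notMem hx, integral_zero]
  rw [key, integral_indicator measurableSet_Icc]
  -- inner computations
  have hg1 : ∀ x ∈ Icc (0:ℝ) (1-c), (∫ y in Icc (0:ℝ) (1-x), f (x, y))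
      = c^2*x^3/(2*(1-c)) + (1-c)*x*(1-x)^2/2 := by
    intro x hx
    obtain ⟨hx0, hxc⟩ := hx
    have hx1 : (0:ℝ) ≤ 1 - x := by linarith
    set y0 : ℝ := c*x/(1-c) with hy0
    have hy00 : 0 ≤ y0 := by positivity
    have hy01 : y0 ≤ 1 - x := by rw [hy0, div_le_iff₀ h1c]; nlinarith
    rw [integral_Icc_eq_integral_Ioc, ← intervalIntegral.integral_of_le hx1]
    have hyc : Continuous (fun y => f (x, y)) :=
      hfc.comp (continuous_const.prodMk continuous_id)
    rw [← intervalIntegral.integral_add_adjacent_intervals (b := y0)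
      (hyc.intervalIntegrable _ _) (hyc.intervalIntegrable _ _)]
    have e1 : (∫ y in (0:ℝ)..y0, f (x, y))
        = ∫ y in (0:ℝ)..y0, (0*y^3 + 0*y^2 + 0*y + x*(c*x)) := by
      apply intervalIntegral.integral_congr
      intro y hy
      rw [Set.uIcc_of_le hy00] at hy
      have hmax : (1-c)*y ≤ c*x := by
        calc (1-c)*y ≤ (1-c)*y0 := by nlinarith [hy.2]
        _ = c*x := by rw [hy0]; field_simp
      show x * max (c*x) ((1-c)*y) = 0*y^3 + 0*y^2 + 0*y + x*(c*x)
      rw [max_eq_left hmax]; ring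
    have e2 : (∫ y in y0..(1-x), f (x, y))
        = ∫ y in y0..(1-x), (0*y^3 + 0*y^2 + (x*(1-c))*y + 0) := by
      apply intervalIntegral.integral_congr
      intro y hy
      rw [Set.uIcc_of_le hy01] at hy
      have hmax : c*x ≤ (1-c)*y := by
        have : c*x = (1-c)*y0 := by rw [hy0]; field_simp
        rw [this]; nlinarith [hy.1]
      show x * max (c*x) ((1-c)*y) = 0*y^3 + 0*y^2 + (x*(1-c))*y + 0
      rw [max_eq_right hmax]; ring
    rw [e1, e2, integ_poly, integ_poly, hy0]
    field_simp
    ring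
  have hg2 : ∀ x ∈ Icc (1-c) 1, (∫ y in Icc (0:ℝ) (1-x), f (x, y)) = c*x^2*(1-x) := by
    intro x hx
    obtain ⟨hxc, hx1'⟩ := hx
    have hx1 : (0:ℝ) ≤ 1 - x := by linarith
    rw [integral_Icc_eq_integral_Ioc, ← intervalIntegral.integral_of_le hx1]
    have e1 : (∫ y in (0:ℝ)..(1-x), f (x, y))
        = ∫ y in (0:ℝ)..(1-x), (0*y^3 + 0*y^2 + 0*y + x*(c*x)) := by
      apply intervalIntegral.integral_congr
      intro y hy
      rw [Set.uIcc_of_le hx1] at hy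
      have hmax : (1-c)*y ≤ c*x := by nlinarith [hy.1, hy.2]
      show x * max (c*x) ((1-c)*y) = 0*y^3 + 0*y^2 + 0*y + x*(c*x)
      rw [max_eq_left hmax]; ring
    rw [e1, integ_poly]
    ring
  -- outer integral
  rw [integral_Icc_eq_integral_Ioc, ← intervalIntegral.integral_of_le (zero_le_one)]
  have hQ1 : Continuous (fun x : ℝ => c^2*x^3/(2*(1-c)) + (1-c)*x*(1-x)^2/2) := by fun_prop
  have hQ2 : Continuous (fun x : ℝ => c*x^2*(1-x)) := by fun_prop
  have hGI1 : IntervalIntegrable (fun x => ∫ y in Icc (0:ℝ) (1-x), f (x, y)) volume 0 (1-c) := by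
    have h : IntervalIntegrable _ volume (0:ℝ) (1-c) := hQ1.intervalIntegrable _ _
    rw [intervalIntegrable_iff] at h ⊢
    apply h.congr_fun _ measurableSet_uIoc
    intro x hx
    rw [Set.uIoc_of_le h1c.le] at hx
    exact (hg1 x ⟨hx.1.le, hx.2⟩).symm
  have hGI2 : IntervalIntegrable (fun x => ∫ y in Icc (0:ℝ) (1-x), f (x, y)) volume (1-c) 1 := by
    have h : IntervalIntegrable _ volume (1-c) (1:ℝ) := hQ2.intervalIntegrable _ _
    rw [intervalIntegrable_iff] at h ⊢
    apply h.congr_fun _ measurableSet_uIoc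
    intro x hx
    rw [Set.uIoc_of_le (by linarith : (1:ℝ)-c ≤ 1)] at hx
    exact (hg2 x ⟨hx.1.le, hx.2⟩).symm
  rw [← intervalIntegral.integral_add_adjacent_intervals hGI1 hGI2]
  have E1 : (∫ x in (0:ℝ)..(1-c), ∫ y in Icc (0:ℝ) (1-x), f (x, y))
      = ∫ x in (0:ℝ)..(1-c), ((c^2/(2*(1-c)) + (1-c)/2)*x^3 + (-(1-c))*x^2 + ((1-c)/2)*x + 0) := by
    apply intervalIntegral.integral_congr
    intro x hx
    rw [Set.uIcc_of_le h1c.le] at hx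
    dsimp only
    rw [hg1 x hx]
    field_simp
    ring
  have E2 : (∫ x in (1-c)..(1:ℝ), ∫ y in Icc (0:ℝ) (1-x), f (x, y))
      = ∫ x in (1-c)..(1:ℝ), ((-c)*x^3 + c*x^2 + 0*x + 0) := by
    apply intervalIntegral.integral_congr
    intro x hx
    rw [Set.uIcc_of_le (by linarith : (1:ℝ)-c ≤ 1)] at hx
    dsimp only
    rw [hg2 x hx]
    ring
  rw [E1, E2, integ_poly, integ_poly]
  field_simp
  ring

private lemma momB (c : ℝ) (hc0 : 0 < c) (hc1 : c < 1) :
    (∫ p in Tset, p.2 * max (c * p.1) ((1 - c) * p.2))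
      = (1 - (1-c) + 3*(1-c)^2 - (1-c)^3)/24 := by
  have hswap : MeasurePreserving (Prod.swap : ℝ × ℝ → ℝ × ℝ) volume volume := by
    have h : MeasurePreserving Prod.swap ((volume : Measure ℝ).prod (volume : Measure ℝ))
        ((volume : Measure ℝ).prod (volume : Measure ℝ)) := Measure.measurePreserving_swap
    rwa [← Measure.volume_eq_prod] at h
  have hemb : MeasurableEmbedding (Prod.swap : ℝ × ℝ → ℝ × ℝ) :=
    MeasurableEquiv.prodComm.measurableEmbedding
  have hpre : (Prod.swap : ℝ × ℝ → ℝ × ℝ) ⁻¹' Tset = Tset := by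
    ext p
    simp only [Tset, Set.mem_preimage, Set.mem_setOf_eq, Prod.fst_swap, Prod.snd_swap,
      Set.mem_Icc]
    constructor <;> rintro ⟨h1, h2, h3⟩ <;> exact ⟨h2, h1, by linarith⟩
  have h := hswap.setIntegral_preimage_emb hemb
    (fun p => p.2 * max (c * p.1) ((1 - c) * p.2)) Tset
  rw [hpre] at h
  rw [← h]
  simp only [Prod.snd_swap, Prod.fst_swap]
  calc (∫ x in Tset, x.1 * max (c * x.2) ((1 - c) * x.1))
      = ∫ p in Tset, p.1 * max ((1-c) * p.1) ((1 - (1-c)) * p.2) := by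
        apply setIntegral_congr_fun Tset_meas
        intro p _
        dsimp only
        rw [max_comm, show (1:ℝ)-(1-c) = c by ring]
    _ = (1 - (1-c) + 3*(1-c)^2 - (1-c)^3)/24 := momA (1-c) (by linarith) (by linarith)

theorem stmt_16 (l : ℝ → ℝ → ℝ → ℝ → ℝ)
    (hl : ∀ a b x y, l a b x y =
      ((1 - 2*b) / (1 - a - b)) * max (a * x) ((1 - a) * y) +
        (2 - (1 - 2*b) / (1 - a - b)) * max ((1 - b) * x) (b * y))
    (J : ℝ → ℝ → ℝ)
    (hJ : ∀ a b, J a b = (1/24) * ((2*a*b - a - b) * (b - a + 1) + a * (b - 1) + 3))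
    (a b : ℝ) (ha : a ∈ Set.Ioo (0:ℝ) (1/2)) (hb : b ∈ Set.Ioo (0:ℝ) (1/2)) :
    (∫ p in {p : ℝ × ℝ | p.1 ∈ Set.Icc (0:ℝ) 1 ∧ p.2 ∈ Set.Icc (0:ℝ) 1 ∧ p.1 + p.2 ≤ 1},
        p.1 * l a b p.1 p.2) = J a b ∧
    (∫ p in {p : ℝ × ℝ | p.1 ∈ Set.Icc (0:ℝ) 1 ∧ p.2 ∈ Set.Icc (0:ℝ) 1 ∧ p.1 + p.2 ≤ 1},
        p.2 * l a b p.1 p.2) = J b a := by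
  obtain ⟨ha0, ha1⟩ := ha
  obtain ⟨hb0, hb1⟩ := hb
  have ha1' : a < 1 := by linarith
  have hb1' : b < 1 := by linarith
  have hab : (0:ℝ) < 1 - a - b := by linarith
  have hab' : (1:ℝ) - a - b ≠ 0 := ne_of_gt hab
  have hTeq : {p : ℝ × ℝ | p.1 ∈ Set.Icc (0:ℝ) 1 ∧ p.2 ∈ Set.Icc (0:ℝ) 1 ∧ p.1 + p.2 ≤ 1}
      = Tset := rfl
  set q : ℝ := (1 - 2*b) / (1 - a - b) with hq
  have hmaxc : ∀ (u v : ℝ), Continuous fun p : ℝ × ℝ => max (u * p.1) (v * p.2) := fun u v =>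
    (continuous_const.mul continuous_fst).max (continuous_const.mul continuous_snd)
  have hIO : ∀ (g : ℝ × ℝ → ℝ) (u v : ℝ), Continuous g →
      Integrable (fun p : ℝ × ℝ => g p * max (u * p.1) (v * p.2)) (volume.restrict Tset) :=
    fun g u v hg =>
      ((hg.mul (hmaxc u v)).continuousOn.integrableOn_compact Tset_compact)
  constructor
  · rw [hTeq]
    have step : (∫ p in Tset, p.1 * l a b p.1 p.2)
        = q * (∫ p in Tset, p.1 * max (a * p.1) ((1-a) * p.2))
          + (2 - q) * (∫ p in Tset, p.1 * max ((1-b) * p.1) (b * p.2)) := by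
      rw [← integral_const_mul, ← integral_const_mul,
        ← integral_add ((hIO _ a (1-a) continuous_fst).const_mul q)
          ((hIO _ (1-b) b continuous_fst).const_mul (2-q))]
      apply setIntegral_congr_fun Tset_meas
      intro p _
      dsimp only
      rw [hl]
      ring
    have hA1 := momA a ha0 ha1'
    have hA2 := momA (1-b) (by linarith) (by linarith)
    rw [show (1:ℝ)-(1-b) = b by ring] at hA2
    rw [step, hA1, hA2, hJ, hq]
    field_simp
    ring
  · rw [hTeq]
    have step : (∫ p in Tset, p.2 * l a b p.1 p.2)
        = q * (∫ p in Tset, p.2 * max (a * p.1) ((1-a) * p.2))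
          + (2 - q) * (∫ p in Tset, p.2 * max ((1-b) * p.1) (b * p.2)) := by
      rw [← integral_const_mul, ← integral_const_mul,
        ← integral_add ((hIO _ a (1-a) continuous_snd).const_mul q)
          ((hIO _ (1-b) b continuous_snd).const_mul (2-q))]
      apply setIntegral_congr_fun Tset_meas
      intro p _
      dsimp only
      rw [hl]
      ring
    have hB1 := momB a ha0 ha1'
    have hB2 := momB (1-b) (by linarith) (by linarith)
    rw [show (1:ℝ)-(1-b) = b by ring] at hB2
    rw [step, hB1, hB2, hJ, hq]
    field_simp
    ring
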